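/- Let μ : ℝ³ → ℝ be C¹, integrable, with integrable gradient, k ∈ ℝ³ \ {0} and ω ∈ ℂ³ with Im(ω·k) > 0 satisfying the Penrose relation. Set λ = −ik·ω (so Re λ > 0) and f(s,y,v) = e^{λs} e^{ik·y} f̂(v) with f̂(v) = (1/|k|²)(k·∇μ(v))/(k·(v−ω)). Then f solves the linearized Vlasov–Poisson equation ∂ₛf + v·∇_y f + ∇_v μ(v) · ∇_y Δ_y^{-1}(∫ f dv) = 0, where Δ_y^{-1} acts on the Fourier mode e^{ik·y} by multiplication by −1/|k|². -/

import Mathlib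

open MeasureTheory RealInnerProductSpace

/-- The growing mode `f(s,y,v) = e^{λs} e^{ik·y} f̂(v)`, with `λ = −ik·ω` and
`f̂(v) = (1/|k|²)(k·∇μ(v))/(k·(v−ω))`, solves the linearized Vlasov–Poisson equation
`∂ₛf + v·∇_y f + ∇_vμ(v)·∇_yΔ_y^{-1}(∫ f dv) = 0`, where on the Fourier mode
`e^{ik·y}` the operator `∇_yΔ_y^{-1}∫·dv` acts as multiplication by `−ik/|k|²`
times the velocity average. -/
theorem penrose_mode_solves_linearized_vlasov_poisson
    (μ : EuclideanSpace ℝ (Fin 3) → ℝ)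
    (hC1 : ContDiff ℝ 1 μ)
    (hint : Integrable μ)
    (hgrad : Integrable (fun v => ‖fderiv ℝ μ v‖))
    (k : EuclideanSpace ℝ (Fin 3)) (hk : k ≠ 0)
    (ω : Fin 3 → ℂ)
    (hω : 0 < (∑ i, ω i * (k i : ℂ)).im)
    (kdot : EuclideanSpace ℝ (Fin 3) → ℂ)
    (hkdot : ∀ v, kdot v = ∑ i, (k i : ℂ) * ((v i : ℂ) - ω i))
    (fhat : EuclideanSpace ℝ (Fin 3) → ℂ)
    (hf : ∀ v, fhat v = (1 / (‖k‖ : ℂ) ^ 2) * ((fderiv ℝ μ v k : ℂ) / kdot v))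
    (hPen : (1 / (‖k‖ : ℂ) ^ 2) * ∫ v, ((fderiv ℝ μ v k : ℂ) / kdot v) = 1)
    (lam : ℂ) (hlam : lam = -Complex.I * ∑ i, (k i : ℂ) * ω i)
    (F : ℝ → EuclideanSpace ℝ (Fin 3) → EuclideanSpace ℝ (Fin 3) → ℂ)
    (hF : ∀ s y v, F s y v
        = Complex.exp (lam * s) * Complex.exp (Complex.I * (⟪k, y⟫ : ℝ)) * fhat v) :
    ∀ s y v,
      deriv (fun s' => F s' y v) s
        + fderiv ℝ (fun y' => F s y' v) y v
        + (-Complex.I / (‖k‖ : ℂ) ^ 2) * (fderiv ℝ μ v k : ℂ)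
            * (Complex.exp (lam * s) * Complex.exp (Complex.I * (⟪k, y⟫ : ℝ))
                * ∫ w, fhat w) = 0 := by
  intro s y v
  have hknorm : ((‖k‖ : ℂ)) ≠ 0 := by
    simp [norm_eq_zero, hk]
  have hωim : (∑ i, ω i * (k i : ℂ)).im = ∑ i, (ω i).im * k i := by
    rw [Complex.im_sum]
    congr 1; funext i; simp [Complex.mul_im]
  -- kdot v ≠ 0
  have hkdotne : kdot v ≠ 0 := by
    have him : (kdot v).im = -(∑ i, ω i * (k i : ℂ)).im := by
      rw [hkdot, hωim, Complex.im_sum]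
      rw [← Finset.sum_neg_distrib]
      congr 1; funext i; simp [Complex.mul_im, mul_comm]
    intro h
    rw [h] at him
    simp at him
    rw [hωim] at hω
    linarith
  -- integral of fhat is 1
  have hI : (∫ w, fhat w) = 1 := by
    have : (∫ w, fhat w) = (1 / (‖k‖ : ℂ) ^ 2) * ∫ v, ((fderiv ℝ μ v k : ℂ) / kdot v) := by
      rw [← MeasureTheory.integral_const_mul]
      exact integral_congr_ae (Filter.Eventually.of_forall fun w => hf w)
    rw [this, hPen]
  -- time derivative
  have h1 : HasDerivAt (fun s' : ℝ => lam * (s' : ℂ)) lam s := by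
    simpa using (Complex.ofRealCLM.hasDerivAt (x := s)).const_mul lam
  have h2 : HasDerivAt (fun s' : ℝ => F s' y v)
      (Complex.exp (lam * s) * lam * (Complex.exp (Complex.I * (⟪k, y⟫ : ℝ)) * fhat v)) s := by
    have := (h1.cexp).mul_const (Complex.exp (Complex.I * (⟪k, y⟫ : ℝ)) * fhat v)
    refine HasDerivAt.congr_of_eventuallyEq this (Filter.Eventually.of_forall fun s' => ?_)
    show F s' y v = _
    rw [hF]; ring
  have hds : deriv (fun s' => F s' y v) s
      = Complex.exp (lam * s) * lam * (Complex.exp (Complex.I * (⟪k, y⟫ : ℝ)) * fhat v) :=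
    h2.deriv
  -- space derivative
  have hg : HasFDerivAt (fun y' : EuclideanSpace ℝ (Fin 3) => Complex.I * ((⟪k, y'⟫ : ℝ) : ℂ))
      (Complex.I • (Complex.ofRealCLM.comp (innerSL ℝ k))) y :=
    ((Complex.ofRealCLM.comp (innerSL ℝ k)).hasFDerivAt (x := y)).const_mul Complex.I
  have h3 := ((hg.cexp.const_mul (Complex.exp (lam * s))).mul_const (fhat v))
  have hfun : (fun y' => F s y' v)
      = fun y' => Complex.exp (lam * s) * Complex.exp (Complex.I * (⟪k, y'⟫ : ℝ)) * fhat v :=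
    funext fun y' => hF s y' v
  have hdy : fderiv ℝ (fun y' => F s y' v) y v
      = Complex.exp (lam * s) * Complex.exp (Complex.I * (⟪k, y⟫ : ℝ)) * fhat v
        * (Complex.I * ((⟪k, v⟫ : ℝ) : ℂ)) := by
    rw [hfun, h3.fderiv]
    simp only [ContinuousLinearMap.smul_apply, ContinuousLinearMap.coe_comp',
      Function.comp_apply, Complex.ofRealCLM_apply, innerSL_apply_apply, smul_eq_mul]
    ring
  rw [hds, hdy, hI, hf v]
  -- algebraic identity
  have hinner : (((⟪k, v⟫ : ℝ) : ℂ)) = ∑ i, (k i : ℂ) * (v i : ℂ) := by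
    rw [PiLp.inner_apply]
    push_cast
    congr 1; funext i
    simp [RCLike.inner_apply]
    ring
  have hlin : lam + Complex.I * ((⟪k, v⟫ : ℝ) : ℂ) = Complex.I * kdot v := by
    rw [hlam, hinner, hkdot v, Finset.mul_sum, Finset.mul_sum, Finset.mul_sum,
      ← Finset.sum_add_distrib]
    congr 1; funext i; ring
  have key : Complex.exp (lam * s) * Complex.exp (Complex.I * (⟪k, y⟫ : ℝ)) *
      ((lam + Complex.I * ((⟪k, v⟫ : ℝ) : ℂ)) * ((1 / (‖k‖ : ℂ) ^ 2) * ((fderiv ℝ μ v k : ℂ) / kdot v))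
        + (-Complex.I / (‖k‖ : ℂ) ^ 2) * (fderiv ℝ μ v k : ℂ)) = 0 := by
    rw [hlin]
    field_simp
    ring
  calc Complex.exp (lam * s) * lam *
        (Complex.exp (Complex.I * (⟪k, y⟫ : ℝ)) *
          ((1 / (‖k‖ : ℂ) ^ 2) * ((fderiv ℝ μ v k : ℂ) / kdot v))) +
      Complex.exp (lam * s) * Complex.exp (Complex.I * (⟪k, y⟫ : ℝ)) *
          ((1 / (‖k‖ : ℂ) ^ 2) * ((fderiv ℝ μ v k : ℂ) / kdot v)) *
        (Complex.I * ((⟪k, v⟫ : ℝ) : ℂ)) +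
      (-Complex.I / (‖k‖ : ℂ) ^ 2) * (fderiv ℝ μ v k : ℂ) *
        (Complex.exp (lam * s) * Complex.exp (Complex.I * (⟪k, y⟫ : ℝ)) * 1)
      = Complex.exp (lam * s) * Complex.exp (Complex.I * (⟪k, y⟫ : ℝ)) *
      ((lam + Complex.I * ((⟪k, v⟫ : ℝ) : ℂ)) * ((1 / (‖k‖ : ℂ) ^ 2) * ((fderiv ℝ μ v k : ℂ) / kdot v))
        + (-Complex.I / (‖k‖ : ℂ) ^ 2) * (fderiv ℝ μ v k : ℂ)) := by ring
    _ = 0 := key
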